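/- Let t₀ ∈ ℝ, k > 0, and β₁, β₂ ≥ 1 with β₁β₂ > 1. Let f₁, f₂ : [t₀,∞) → [0,∞) be continuous, and define F(t) = ( f₁(t)^{1/(β₁+1)} f₂(t)^{1/(β₂+1)} )^{(β₁+1)(β₂+1)/(β₁+β₂+2)}. Suppose ∫_{t₀}^{∞} F(s) ds = ∞. Then there do not exist continuous functions v₁, v₂ : [t₀,∞) → ℝ satisfying v₁(t) ≥ k + k ∫_{t₀}^{t} f₁(s) v₂(s)^{β₁} ds and v₂(t) ≥ k + k ∫_{t₀}^{t} f₂(s) v₁(s)^{β₂} ds for all t ≥ t₀; that is, any pair of continuous functions satisfying these integral inequalities must blow up in finite time. -/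

import Mathlib

open MeasureTheory Set

set_option maxHeartbeats 1000000

/-- if `∫_{t₀}^∞ F = ∞`, where
`F = (f₁^{1/(β₁+1)} f₂^{1/(β₂+1)})^{(β₁+1)(β₂+1)/(β₁+β₂+2)}`, then there is no pair of
continuous functions `v₁, v₂ : [t₀,∞) → ℝ` with
`vᵢ(t) ≥ k + k ∫_{t₀}^t fᵢ(s) v_j(s)^{βᵢ} ds` for all `t ≥ t₀`. -/
theorem ode_system_blowup
    (t₀ k β₁ β₂ : ℝ) (hk : 0 < k)
    (hβ₁ : 1 ≤ β₁) (hβ₂ : 1 ≤ β₂) (hββ : 1 < β₁ * β₂)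
    (f₁ f₂ : ℝ → ℝ)
    (hf₁c : ContinuousOn f₁ (Set.Ici t₀)) (hf₂c : ContinuousOn f₂ (Set.Ici t₀))
    (hf₁0 : ∀ t ≥ t₀, 0 ≤ f₁ t) (hf₂0 : ∀ t ≥ t₀, 0 ≤ f₂ t)
    (F : ℝ → ℝ)
    (hF : ∀ t ≥ t₀,
      F t = (f₁ t ^ (1 / (β₁ + 1)) * f₂ t ^ (1 / (β₂ + 1))) ^
        ((β₁ + 1) * (β₂ + 1) / (β₁ + β₂ + 2)))
    (hFint : ∫⁻ s in Set.Ici t₀, ENNReal.ofReal (F s) = ⊤) :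
    ¬ ∃ v₁ v₂ : ℝ → ℝ,
      ContinuousOn v₁ (Set.Ici t₀) ∧ ContinuousOn v₂ (Set.Ici t₀) ∧
      (∀ t ≥ t₀, v₁ t ≥ k + k * ∫ s in t₀..t, f₁ s * v₂ s ^ β₁) ∧
      (∀ t ≥ t₀, v₂ t ≥ k + k * ∫ s in t₀..t, f₂ s * v₁ s ^ β₂) := by
  rintro ⟨v₁, v₂, hv₁c, hv₂c, hiv₁, hiv₂⟩
  have hvk : ∀ t ≥ t₀, k ≤ v₁ t ∧ k ≤ v₂ t := by
    -- step 1: both stay above k/2 on any compact interval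
    have hB : ∀ T, t₀ ≤ T → ∀ t ∈ Icc t₀ T, k/2 < v₁ t ∧ k/2 < v₂ t := by
      intro T hT
      by_contra hcon
      push_neg at hcon
      obtain ⟨t₁, ht₁, ht₁'⟩ := hcon
      set B : Set ℝ := (Icc t₀ T ∩ v₁ ⁻¹' Iic (k/2)) ∪ (Icc t₀ T ∩ v₂ ⁻¹' Iic (k/2)) with hBdef
      have hBne : B.Nonempty := by
        refine ⟨t₁, ?_⟩
        rcases le_or_gt (v₁ t₁) (k/2) with h | h
        · exact Or.inl ⟨ht₁, h⟩
        · exact Or.inr ⟨ht₁, ht₁' h⟩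
      have hBclosed : IsClosed B :=
        ((hv₁c.mono (Icc_subset_Ici_self)).preimage_isClosed_of_isClosed isClosed_Icc
          isClosed_Iic).union
        ((hv₂c.mono (Icc_subset_Ici_self)).preimage_isClosed_of_isClosed isClosed_Icc
          isClosed_Iic)
      have hBbdd : BddBelow B := ⟨t₀, by rintro x (⟨hx, _⟩ | ⟨hx, _⟩) <;> exact hx.1⟩
      set τ := sInf B with hτdef
      have hτB : τ ∈ B := hBclosed.csInf_mem hBne hBbdd
      have hτIcc : τ ∈ Icc t₀ T := by rcases hτB with ⟨h, _⟩ | ⟨h, _⟩ <;> exact h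
      have hτ0 : t₀ ≤ τ := hτIcc.1
      -- on [t₀, τ) both functions are > k/2, hence nonnegative
      have hpos : ∀ s ∈ Ico t₀ τ, 0 ≤ v₁ s ∧ 0 ≤ v₂ s := by
        intro s hs
        have hsB : s ∉ B := fun h => absurd (csInf_le hBbdd h) (not_le.2 hs.2)
        have hsIcc : s ∈ Icc t₀ T := ⟨hs.1, le_trans hs.2.le hτIcc.2⟩
        constructor
        · by_contra h
          push_neg at h
          exact hsB (mem_union _ _ _ |>.2 (Or.inl ⟨hsIcc, show v₁ s ≤ k/2 by linarith⟩))
        · by_contra h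
          push_neg at h
          exact hsB (mem_union _ _ _ |>.2 (Or.inr ⟨hsIcc, show v₂ s ≤ k/2 by linarith⟩))
      -- the integrals up to τ are nonnegative
      have hae : ∀ (g u : ℝ → ℝ), (∀ s ≥ t₀, 0 ≤ g s) → (∀ s ∈ Ico t₀ τ, 0 ≤ u s) →
          ∀ β : ℝ, 0 ≤ ∫ s in t₀..τ, g s * u s ^ β := by
        intro g u hg hu β
        refine intervalIntegral.integral_nonneg_of_ae_restrict hτ0 ?_
        have hnull : (volume.restrict (Icc t₀ τ)) {s | ¬ (0:ℝ) ≤ g s * u s ^ β} = 0 := by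
          rw [Measure.restrict_apply' measurableSet_Icc]
          refine measure_mono_null (fun x hx => ?_) (measure_singleton τ)
          obtain ⟨hx1, hx2⟩ := hx
          simp only [mem_setOf_eq] at hx1
          rcases lt_or_eq_of_le hx2.2 with h | h
          · exact absurd (mul_nonneg (hg x hx2.1)
              (Real.rpow_nonneg (hu x ⟨hx2.1, h⟩) β)) hx1
          · exact h
        exact (ae_iff).2 hnull
      have hτv₁ : k ≤ v₁ τ := by
        have := hiv₁ τ hτ0
        have h0 := hae f₁ v₂ hf₁0 (fun s hs => (hpos s hs).2) β₁
        nlinarith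
      have hτv₂ : k ≤ v₂ τ := by
        have := hiv₂ τ hτ0
        have h0 := hae f₂ v₁ hf₂0 (fun s hs => (hpos s hs).1) β₂
        nlinarith
      rcases hτB with ⟨_, h⟩ | ⟨_, h⟩ <;> simp only [mem_preimage, mem_Iic] at h <;> linarith
    -- step 2: hence nonneg everywhere, hence ≥ k
    have hv0 : ∀ t ≥ t₀, 0 ≤ v₁ t ∧ 0 ≤ v₂ t := by
      intro t ht
      have := hB t ht t ⟨ht, le_rfl⟩
      constructor <;> linarith [this.1, this.2]
    intro t ht
    constructor
    · have := hiv₁ t ht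
      have h0 : 0 ≤ ∫ s in t₀..t, f₁ s * v₂ s ^ β₁ :=
        intervalIntegral.integral_nonneg ht fun s hs =>
          mul_nonneg (hf₁0 s hs.1) (Real.rpow_nonneg (hv0 s hs.1).2 β₁)
      nlinarith
    · have := hiv₂ t ht
      have h0 : 0 ≤ ∫ s in t₀..t, f₂ s * v₁ s ^ β₂ :=
        intervalIntegral.integral_nonneg ht fun s hs =>
          mul_nonneg (hf₂0 s hs.1) (Real.rpow_nonneg (hv0 s hs.1).1 β₂)
      nlinarith
  -- exponents
  set θ : ℝ := (β₂ + 1) / (β₁ + β₂ + 2) with hθdef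
  set γ : ℝ := (β₁ + 1) * (β₂ + 1) / (β₁ + β₂ + 2) with hγdef
  have hS : (0:ℝ) < β₁ + β₂ + 2 := by linarith
  have hb₁ : (0:ℝ) < β₁ + 1 := by linarith
  have hb₂ : (0:ℝ) < β₂ + 1 := by linarith
  have hθpos : 0 < θ := by rw [hθdef]; positivity
  have h1θ : 1 - θ = (β₁ + 1) / (β₁ + β₂ + 2) := by
    rw [hθdef]; field_simp; ring
  have h1θ0 : 0 ≤ 1 - θ := by rw [h1θ]; positivity
  have hγ1 : 1 < γ := by
    rw [hγdef, lt_div_iff₀ hS]; nlinarith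
  have hθγ : (β₁ + 1) * θ = γ := by rw [hθdef, hγdef]; field_simp; try ring
  have h1θγ : (β₂ + 1) * (1 - θ) = γ := by rw [h1θ, hγdef]; field_simp; try ring
  have hexp1 : 1 / (β₁ + 1) * γ = θ := by
    rw [hθdef, hγdef]; field_simp; try ring
  have hexp2 : 1 / (β₂ + 1) * γ = 1 - θ := by
    rw [h1θ, hγdef]; field_simp; try ring
  have hγ0 : (0:ℝ) ≤ γ := by linarith
  clear_value θ γ
  -- continuity and nonnegativity of F
  have hFc : ContinuousOn F (Ici t₀) := by
    have : ContinuousOn (fun t => (f₁ t ^ (1 / (β₁ + 1)) * f₂ t ^ (1 / (β₂ + 1))) ^ γ)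
        (Ici t₀) := by
      refine ContinuousOn.rpow_const ?_ fun x _ => Or.inr hγ0
      exact (hf₁c.rpow_const fun x _ => Or.inr (one_div_nonneg.2 hb₁.le)).mul
        (hf₂c.rpow_const fun x _ => Or.inr (one_div_nonneg.2 hb₂.le))
    exact this.congr fun x hx => hF x hx
  have hF0 : ∀ t ≥ t₀, 0 ≤ F t := fun t ht => by
    rw [hF t ht]
    exact Real.rpow_nonneg (mul_nonneg (Real.rpow_nonneg (hf₁0 t ht) _)
      (Real.rpow_nonneg (hf₂0 t ht) _)) _
  -- integrand continuity
  have hg₁c : ContinuousOn (fun s => f₁ s * v₂ s ^ β₁) (Ici t₀) :=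
    hf₁c.mul (hv₂c.rpow_const fun x _ => Or.inr (by linarith))
  have hg₂c : ContinuousOn (fun s => f₂ s * v₁ s ^ β₂) (Ici t₀) :=
    hf₂c.mul (hv₁c.rpow_const fun x _ => Or.inr (by linarith))
  have hg₁0 : ∀ s ≥ t₀, 0 ≤ f₁ s * v₂ s ^ β₁ := fun s hs =>
    mul_nonneg (hf₁0 s hs) (Real.rpow_nonneg (le_trans hk.le (hvk s hs).2) β₁)
  have hg₂0 : ∀ s ≥ t₀, 0 ≤ f₂ s * v₁ s ^ β₂ := fun s hs =>
    mul_nonneg (hf₂0 s hs) (Real.rpow_nonneg (le_trans hk.le (hvk s hs).1) β₂)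
  -- the comparison functions
  set w₁ : ℝ → ℝ := fun t => k + k * ∫ s in t₀..t, f₁ s * v₂ s ^ β₁ with hw₁def
  set w₂ : ℝ → ℝ := fun t => k + k * ∫ s in t₀..t, f₂ s * v₁ s ^ β₂ with hw₂def
  set P : ℝ → ℝ := fun t => ∫ s in t₀..t, F s with hPdef
  set ψ : ℝ → ℝ := fun t => (w₁ t * w₂ t) ^ (1 - γ) + ((γ - 1) * k) * P t with hψdef
  have hw₁v : ∀ t ≥ t₀, w₁ t ≤ v₁ t := fun t ht => hiv₁ t ht
  have hw₂v : ∀ t ≥ t₀, w₂ t ≤ v₂ t := fun t ht => hiv₂ t ht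
  have hw₁k : ∀ t ≥ t₀, k ≤ w₁ t := by
    intro t ht
    have h0 : 0 ≤ ∫ s in t₀..t, f₁ s * v₂ s ^ β₁ :=
      intervalIntegral.integral_nonneg ht fun s hs => hg₁0 s hs.1
    simp only [hw₁def]; nlinarith
  have hw₂k : ∀ t ≥ t₀, k ≤ w₂ t := by
    intro t ht
    have h0 : 0 ≤ ∫ s in t₀..t, f₂ s * v₁ s ^ β₂ :=
      intervalIntegral.integral_nonneg ht fun s hs => hg₂0 s hs.1
    simp only [hw₂def]; nlinarith
  -- derivative of ψ is nonpositive on (t₀, ∞)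
  have hψder : ∀ x ∈ Ioi t₀, ∃ d ≤ 0, HasDerivAt ψ d x := by
    intro x hx
    have hx' : t₀ < x := hx
    have hxI : t₀ ≤ x := hx'.le
    have hW₁0 : 0 < w₁ x := lt_of_lt_of_le hk (hw₁k x hxI)
    have hW₂0 : 0 < w₂ x := lt_of_lt_of_le hk (hw₂k x hxI)
    -- FTC derivatives
    have hderW : ∀ g : ℝ → ℝ, ContinuousOn g (Ici t₀) →
        HasDerivAt (fun t => ∫ s in t₀..t, g s) (g x) x := by
      intro g hgc
      have hint : IntervalIntegrable g volume t₀ x :=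
        (hgc.mono (by rw [uIcc_of_le hxI]; exact Icc_subset_Ici_self)).intervalIntegrable
      have hmeas : StronglyMeasurableAtFilter g (nhds x) volume :=
        ContinuousOn.stronglyMeasurableAtFilter isOpen_Ioi (hgc.mono Ioi_subset_Ici_self) x hx
      have hca : ContinuousAt g x := hgc.continuousAt (Ici_mem_nhds hx')
      exact intervalIntegral.integral_hasDerivAt_right hint hmeas hca
    have hw₁' : HasDerivAt w₁ (k * (f₁ x * v₂ x ^ β₁)) x := by
      simpa only using ((hderW _ hg₁c).const_mul k).const_add k
    have hw₂' : HasDerivAt w₂ (k * (f₂ x * v₁ x ^ β₂)) x := by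
      simpa only using ((hderW _ hg₂c).const_mul k).const_add k
    have hP' : HasDerivAt P (F x) x := hderW F hFc
    have hu' : HasDerivAt (fun t => w₁ t * w₂ t)
        (k * (f₁ x * v₂ x ^ β₁) * w₂ x + w₁ x * (k * (f₂ x * v₁ x ^ β₂))) x := hw₁'.mul hw₂'
    -- the key AM-GM estimate
    have hkey : k * F x * (w₁ x * w₂ x) ^ γ ≤
        k * (f₁ x * v₂ x ^ β₁) * w₂ x + w₁ x * (k * (f₂ x * v₁ x ^ β₂)) := by
      set a : ℝ := k * (f₁ x * w₂ x ^ (β₁ + 1)) with hadef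
      set b : ℝ := k * (f₂ x * w₁ x ^ (β₂ + 1)) with hbdef
      have ha0 : 0 ≤ a := by
        rw [hadef]
        exact mul_nonneg hk.le (mul_nonneg (hf₁0 x hxI) (Real.rpow_nonneg hW₂0.le _))
      have hb0 : 0 ≤ b := by
        rw [hbdef]
        exact mul_nonneg hk.le (mul_nonneg (hf₂0 x hxI) (Real.rpow_nonneg hW₁0.le _))
      have ha : a ≤ k * (f₁ x * v₂ x ^ β₁) * w₂ x := by
        have h1 : w₂ x ^ (β₁ + 1) ≤ v₂ x ^ β₁ * w₂ x := by
          rw [Real.rpow_add_one (ne_of_gt hW₂0)]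
          exact mul_le_mul_of_nonneg_right
            (Real.rpow_le_rpow hW₂0.le (hw₂v x hxI) (by linarith)) hW₂0.le
        have h2 := mul_le_mul_of_nonneg_left
          (mul_le_mul_of_nonneg_left h1 (hf₁0 x hxI)) hk.le
        rw [hadef]; nlinarith [h2]
      have hb : b ≤ w₁ x * (k * (f₂ x * v₁ x ^ β₂)) := by
        have h1 : w₁ x ^ (β₂ + 1) ≤ v₁ x ^ β₂ * w₁ x := by
          rw [Real.rpow_add_one (ne_of_gt hW₁0)]
          exact mul_le_mul_of_nonneg_right
            (Real.rpow_le_rpow hW₁0.le (hw₁v x hxI) (by linarith)) hW₁0.le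
        have h2 := mul_le_mul_of_nonneg_left
          (mul_le_mul_of_nonneg_left h1 (hf₂0 x hxI)) hk.le
        rw [hbdef]; nlinarith [h2]
      have hgeom := Real.geom_mean_le_arith_mean2_weighted hθpos.le h1θ0 ha0 hb0 (by ring)
      have heq : a ^ θ * b ^ (1 - θ) = k * F x * (w₁ x * w₂ x) ^ γ := by
        have e1 : a ^ θ = k ^ θ * (f₁ x ^ θ * w₂ x ^ γ) := by
          rw [hadef, Real.mul_rpow hk.le (mul_nonneg (hf₁0 x hxI) (Real.rpow_nonneg hW₂0.le _)),
            Real.mul_rpow (hf₁0 x hxI) (Real.rpow_nonneg hW₂0.le _),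
            ← Real.rpow_mul hW₂0.le, hθγ]
        have e2 : b ^ (1 - θ) = k ^ (1 - θ) * (f₂ x ^ (1 - θ) * w₁ x ^ γ) := by
          rw [hbdef, Real.mul_rpow hk.le (mul_nonneg (hf₂0 x hxI) (Real.rpow_nonneg hW₁0.le _)),
            Real.mul_rpow (hf₂0 x hxI) (Real.rpow_nonneg hW₁0.le _),
            ← Real.rpow_mul hW₁0.le, h1θγ]
        have e3 : F x = f₁ x ^ θ * f₂ x ^ (1 - θ) := by
          rw [hF x hxI,
            Real.mul_rpow (Real.rpow_nonneg (hf₁0 x hxI) _) (Real.rpow_nonneg (hf₂0 x hxI) _),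
            ← Real.rpow_mul (hf₁0 x hxI), ← Real.rpow_mul (hf₂0 x hxI), hexp1, hexp2]
        have e4 : (w₁ x * w₂ x) ^ γ = w₁ x ^ γ * w₂ x ^ γ :=
          Real.mul_rpow hW₁0.le hW₂0.le
        have e5 : k ^ θ * k ^ (1 - θ) = k := by
          rw [← Real.rpow_add hk, show θ + (1 - θ) = 1 by ring, Real.rpow_one]
        rw [e1, e2, e3, e4]
        linear_combination (f₁ x ^ θ * f₂ x ^ (1 - θ) * w₁ x ^ γ * w₂ x ^ γ) * e5
      calc k * F x * (w₁ x * w₂ x) ^ γ = a ^ θ * b ^ (1 - θ) := heq.symm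
        _ ≤ θ * a + (1 - θ) * b := hgeom
        _ ≤ a + b := by nlinarith [ha0, hb0]
        _ ≤ _ := add_le_add ha hb
    -- assemble the derivative of ψ
    have hU0 : 0 < w₁ x * w₂ x := mul_pos hW₁0 hW₂0
    have hφ' : HasDerivAt (fun t => (w₁ t * w₂ t) ^ (1 - γ))
        ((k * (f₁ x * v₂ x ^ β₁) * w₂ x + w₁ x * (k * (f₂ x * v₁ x ^ β₂))) * (1 - γ) *
          (w₁ x * w₂ x) ^ (1 - γ - 1)) x :=
      hu'.rpow_const (Or.inl (ne_of_gt hU0))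
    refine ⟨_, ?_, (hφ'.add (hP'.const_mul ((γ - 1) * k))).congr_deriv rfl⟩
    -- show the derivative value is ≤ 0
    set U' : ℝ := k * (f₁ x * v₂ x ^ β₁) * w₂ x + w₁ x * (k * (f₂ x * v₁ x ^ β₂)) with hU'def
    have hA : (0:ℝ) < (w₁ x * w₂ x) ^ γ := Real.rpow_pos_of_pos hU0 γ
    have hpow : (w₁ x * w₂ x) ^ (1 - γ - 1) = ((w₁ x * w₂ x) ^ γ)⁻¹ := by
      rw [show (1 - γ - 1 : ℝ) = -γ by ring, Real.rpow_neg hU0.le]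
    rw [hpow]
    have h3 := mul_le_mul_of_nonneg_left hkey
      (mul_nonneg (by linarith : (0:ℝ) ≤ γ - 1) (inv_nonneg.2 hA.le))
    have h4 : ((w₁ x * w₂ x) ^ γ) * ((w₁ x * w₂ x) ^ γ)⁻¹ = 1 := mul_inv_cancel₀ (ne_of_gt hA)
    have h5 : (γ - 1) * ((w₁ x * w₂ x) ^ γ)⁻¹ * (k * F x * (w₁ x * w₂ x) ^ γ)
        = (γ - 1) * (k * F x) := by
      calc (γ - 1) * ((w₁ x * w₂ x) ^ γ)⁻¹ * (k * F x * (w₁ x * w₂ x) ^ γ)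
          = (γ - 1) * (k * F x) * ((w₁ x * w₂ x) ^ γ * ((w₁ x * w₂ x) ^ γ)⁻¹) := by ring
        _ = (γ - 1) * (k * F x) := by rw [h4, mul_one]
    nlinarith [h3, h5]
  -- ψ is antitone on [t₀, T]
  have hψT : ∀ T, t₀ ≤ T → ψ T ≤ ψ t₀ := by
    intro T hT
    have hwc : ∀ (g : ℝ → ℝ), ContinuousOn g (Ici t₀) →
        ContinuousOn (fun t => ∫ s in t₀..t, g s) (Icc t₀ T) := by
      intro g hgc
      have h1 : IntegrableOn g (uIcc t₀ T) volume := by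
        rw [uIcc_of_le hT]; exact (hgc.mono Icc_subset_Ici_self).integrableOn_Icc
      have h2 := intervalIntegral.continuousOn_primitive_interval h1
      rwa [uIcc_of_le hT] at h2
    have hw₁c : ContinuousOn w₁ (Icc t₀ T) := by
      simp only [hw₁def]
      exact continuousOn_const.add (continuousOn_const.mul (hwc _ hg₁c))
    have hw₂c : ContinuousOn w₂ (Icc t₀ T) := by
      simp only [hw₂def]
      exact continuousOn_const.add (continuousOn_const.mul (hwc _ hg₂c))
    have hPc : ContinuousOn P (Icc t₀ T) := by
      simp only [hPdef]; exact hwc _ hFc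
    have hψc : ContinuousOn ψ (Icc t₀ T) := by
      simp only [hψdef]
      refine (((hw₁c.mul hw₂c).rpow_const fun t ht => Or.inl ?_).add
        (continuousOn_const.mul hPc))
      exact ne_of_gt (mul_pos (lt_of_lt_of_le hk (hw₁k t ht.1))
        (lt_of_lt_of_le hk (hw₂k t ht.1)))
    have hdiff : DifferentiableOn ℝ ψ (interior (Icc t₀ T)) := by
      intro y hy
      rw [interior_Icc] at hy
      obtain ⟨d, _, hd⟩ := hψder y hy.1
      exact hd.differentiableAt.differentiableWithinAt
    have hder : ∀ y ∈ interior (Icc t₀ T), deriv ψ y ≤ 0 := by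
      intro y hy
      rw [interior_Icc] at hy
      obtain ⟨d, hd0, hd⟩ := hψder y hy.1
      rw [hd.deriv]; exact hd0
    exact antitoneOn_of_deriv_nonpos (convex_Icc _ _) hψc hdiff hder
      (left_mem_Icc.2 hT) (right_mem_Icc.2 hT) hT
  have hψt₀ : ψ t₀ = (k * k) ^ (1 - γ) := by
    simp only [hψdef, hPdef, hw₁def, hw₂def, intervalIntegral.integral_same,
      mul_zero, add_zero]
  set M : ℝ := (k * k) ^ (1 - γ) / ((γ - 1) * k) with hMdef
  have hγk : 0 < (γ - 1) * k := mul_pos (by linarith) hk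
  have hPle : ∀ T, t₀ ≤ T → P T ≤ M := by
    intro T hT
    have h1 := hψT T hT
    rw [hψt₀] at h1
    simp only [hψdef] at h1
    have h2 : 0 ≤ (w₁ T * w₂ T) ^ (1 - γ) :=
      Real.rpow_nonneg (mul_nonneg (le_trans hk.le (hw₁k T hT))
        (le_trans hk.le (hw₂k T hT))) _
    rw [hMdef, le_div_iff₀ hγk]
    nlinarith [h1, h2]
  -- contradiction with the divergent integral
  have hbound : ∀ n : ℕ, ∫⁻ s in Icc t₀ (t₀ + (n:ℝ)), ENNReal.ofReal (F s)
      ≤ ENNReal.ofReal M := by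
    intro n
    have hT : t₀ ≤ t₀ + (n:ℝ) := le_add_of_nonneg_right (Nat.cast_nonneg n)
    have hFi : IntegrableOn F (Icc t₀ (t₀ + (n:ℝ))) volume :=
      (hFc.mono Icc_subset_Ici_self).integrableOn_Icc
    have hnn : 0 ≤ᵐ[volume.restrict (Icc t₀ (t₀ + (n:ℝ)))] F :=
      (ae_restrict_iff' measurableSet_Icc).2 (Filter.Eventually.of_forall fun s hs => hF0 s hs.1)
    rw [← ofReal_integral_eq_lintegral_ofReal hFi hnn]
    apply ENNReal.ofReal_le_ofReal
    have he : ∫ s in Icc t₀ (t₀ + (n:ℝ)), F s = P (t₀ + (n:ℝ)) := by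
      rw [integral_Icc_eq_integral_Ioc, hPdef]
      exact (intervalIntegral.integral_of_le hT).symm
    rw [he]; exact hPle _ hT
  have hmeasn : ∀ n : ℕ, AEMeasurable
      (fun x => (Icc t₀ (t₀ + (n:ℝ))).indicator (fun s => ENNReal.ofReal (F s)) x)
      volume := fun n =>
    (aemeasurable_indicator_iff measurableSet_Icc).2
      (((hFc.mono Icc_subset_Ici_self).aemeasurable measurableSet_Icc).ennreal_ofReal)
  have hptw : ∀ x : ℝ, (Ici t₀).indicator (fun s => ENNReal.ofReal (F s)) x
      = ⨆ n : ℕ, (Icc t₀ (t₀ + (n:ℝ))).indicator (fun s => ENNReal.ofReal (F s)) x := by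
    intro x
    by_cases hx : t₀ ≤ x
    · obtain ⟨n, hn⟩ := exists_nat_ge (x - t₀)
      refine le_antisymm ?_ (iSup_le fun m =>
        indicator_le_indicator_of_subset Icc_subset_Ici_self (fun _ => zero_le) x)
      rw [Set.indicator_of_mem (mem_Ici.2 hx)]
      refine le_iSup_of_le n ?_
      rw [Set.indicator_of_mem (mem_Icc.2 ⟨hx, by linarith⟩)]
    · have h2 : ∀ n : ℕ, x ∉ Icc t₀ (t₀ + (n:ℝ)) := fun n h => hx h.1
      have hx' : x ∉ Ici t₀ := fun h => hx (mem_Ici.1 h)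
      rw [Set.indicator_of_notMem hx']
      simp only [Set.indicator_of_notMem (h2 _), ciSup_const]
  have hmono : ∀ᵐ x : ℝ, Monotone fun n : ℕ =>
      (Icc t₀ (t₀ + (n:ℝ))).indicator (fun s => ENNReal.ofReal (F s)) x :=
    Filter.Eventually.of_forall fun x m n hmn =>
      indicator_le_indicator_of_subset
        (Icc_subset_Icc le_rfl (by
          have : (m:ℝ) ≤ (n:ℝ) := Nat.cast_le.2 hmn
          linarith)) (fun _ => zero_le) x
  have htop : ∫⁻ s in Ici t₀, ENNReal.ofReal (F s) ≤ ENNReal.ofReal M := by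
    rw [← lintegral_indicator measurableSet_Ici]
    calc ∫⁻ x, (Ici t₀).indicator (fun s => ENNReal.ofReal (F s)) x
        = ∫⁻ x, ⨆ n : ℕ, (Icc t₀ (t₀ + (n:ℝ))).indicator (fun s => ENNReal.ofReal (F s)) x :=
          lintegral_congr hptw
      _ = ⨆ n : ℕ, ∫⁻ x, (Icc t₀ (t₀ + (n:ℝ))).indicator (fun s => ENNReal.ofReal (F s)) x :=
          lintegral_iSup' hmeasn hmono
      _ ≤ ENNReal.ofReal M := iSup_le fun n => by
          rw [lintegral_indicator measurableSet_Icc]; exact hbound n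
  rw [hFint] at htop
  exact ENNReal.ofReal_ne_top (top_le_iff.1 htop)
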